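/- Let n ≥ 1 and let G ∈ ℝ^{(2n+1)×(2n+1)} be the Gram matrix of the 2n+1 row vectors r₀ := (1, 0, 0), r_{+i} := (1, e_i, (1/2)e_i), r_{−i} := (1, −e_i, (1/2)e_i) ∈ ℝ^{1+n+n} (i = 1,…,n). Then the smallest eigenvalue of G satisfies λ_min(G) ≥ 1/(4n+3). -/

import Mathlib

open Matrix

/-- Index set `{0, +1, …, +n, −1, …, −n}` for the fallback points. -/
abbrev Idx (n : ℕ) := Unit ⊕ Fin n ⊕ Fin n

/-- The rows `r₀ = (1,0,0)`, `r_{+i} = (1, eᵢ, ½eᵢ)`, `r_{−i} = (1, −eᵢ, ½eᵢ)` in `ℝ^{1+n+n}`. -/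
noncomputable def rvec (n : ℕ) : Idx n → Idx n → ℝ
  | Sum.inl _ => Sum.elim (fun _ => 1) (Sum.elim (fun _ => 0) fun _ => 0)
  | Sum.inr (Sum.inl i) =>
      Sum.elim (fun _ => 1)
        (Sum.elim (fun j => if j = i then 1 else 0) fun j => if j = i then 1 / 2 else 0)
  | Sum.inr (Sum.inr i) =>
      Sum.elim (fun _ => 1)
        (Sum.elim (fun j => if j = i then -1 else 0) fun j => if j = i then 1 / 2 else 0)

/-- The Gram matrix `G_{ab} = r_aᵀ r_b` of the vectors `rvec`. -/
noncomputable def gram (n : ℕ) : Matrix (Idx n) (Idx n) ℝ :=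
  Matrix.of fun a b => rvec n a ⬝ᵥ rvec n b

/-- The smallest eigenvalue of a (Hermitian) real matrix. -/
noncomputable def lambdaMin {ι : Type*} [Fintype ι] [DecidableEq ι] [Nonempty ι]
    (M : Matrix ι ι ℝ) : ℝ :=
  if h : M.IsHermitian then ⨅ i, h.eigenvalues i else 0

/-- The scalar inequality at the heart of the bound. -/
lemma stmt12_aux (m t S A B : ℝ) (hm : 1 ≤ m) (hA : 0 ≤ A) (hB : 0 ≤ B)
    (hSB : S ^ 2 ≤ m * B) :
    1 / (4 * m + 3) * (t ^ 2 + (A + B) / 2) ≤ (t + S) ^ 2 + A + B / 4 := by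
  have hm0 : (0:ℝ) < m := by linarith
  rw [div_mul_eq_mul_div, one_mul, div_le_iff₀ (by linarith)]
  have hident : (((t + S) ^ 2 + A + B / 4) * (4 * m + 3) - (t ^ 2 + (A + B) / 2))
      * (4 * m * (16 * m ^ 2 + 8 * m))
      = ((16 * m ^ 2 + 8 * m) * t + (16 * m ^ 2 + 12 * m) * S) ^ 2 + 8 * m * S ^ 2
        + (16 * m ^ 2 + 8 * m) * (4 * m + 1) * (m * B - S ^ 2)
        + 2 * m * (16 * m ^ 2 + 8 * m) * (8 * m + 5) * A := by ring
  have h0 : 0 ≤ (((t + S) ^ 2 + A + B / 4) * (4 * m + 3) - (t ^ 2 + (A + B) / 2))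
      * (4 * m * (16 * m ^ 2 + 8 * m)) := by
    rw [hident]
    have h1 : 0 ≤ m * B - S ^ 2 := by linarith
    positivity
  have hpos : (0:ℝ) < 4 * m * (16 * m ^ 2 + 8 * m) := by positivity
  nlinarith [h0, hpos]

/-- The quadratic form of `gram n`, written as a sum of squares. -/
lemma stmt12_quad_eq (n : ℕ) (x : Idx n → ℝ) :
    x ⬝ᵥ (gram n *ᵥ x) =
      (x (Sum.inl ()) + ∑ i, (x (Sum.inr (Sum.inl i)) + x (Sum.inr (Sum.inr i)))) ^ 2
      + ∑ j, (x (Sum.inr (Sum.inl j)) - x (Sum.inr (Sum.inr j))) ^ 2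
      + (∑ j, (x (Sum.inr (Sum.inl j)) + x (Sum.inr (Sum.inr j))) ^ 2) / 4 := by
  have hfact : gram n = (Matrix.of (rvec n)) * (Matrix.of (rvec n))ᵀ := by
    ext a b
    simp [_root_.gram, Matrix.mul_apply, dotProduct]
  set w : Idx n → ℝ := (Matrix.of (rvec n))ᵀ *ᵥ x with hw
  have h1 : x ⬝ᵥ (gram n *ᵥ x) = w ⬝ᵥ w := by
    rw [hfact, ← mulVec_mulVec, dotProduct_mulVec, ← mulVec_transpose]
  have hw0 : w (Sum.inl ()) =
      x (Sum.inl ()) + ∑ i, (x (Sum.inr (Sum.inl i)) + x (Sum.inr (Sum.inr i))) := by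
    simp [hw, Matrix.mulVec, dotProduct, Fintype.sum_sum_type, rvec, Finset.sum_add_distrib]
  have hwp : ∀ j, w (Sum.inr (Sum.inl j)) =
      x (Sum.inr (Sum.inl j)) - x (Sum.inr (Sum.inr j)) := by
    intro j
    simp [hw, Matrix.mulVec, dotProduct, Fintype.sum_sum_type, rvec, ite_mul,
      Finset.sum_ite_eq, sub_eq_add_neg]
  have hwm : ∀ j, w (Sum.inr (Sum.inr j)) =
      (x (Sum.inr (Sum.inl j)) + x (Sum.inr (Sum.inr j))) / 2 := by
    intro j
    simp [hw, Matrix.mulVec, dotProduct, Fintype.sum_sum_type, rvec, ite_mul,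
      Finset.sum_ite_eq]
    ring
  rw [h1]
  have h2 : w ⬝ᵥ w = (w (Sum.inl ())) ^ 2 + ∑ j, (w (Sum.inr (Sum.inl j))) ^ 2
      + ∑ j, (w (Sum.inr (Sum.inr j))) ^ 2 := by
    simp [dotProduct, Fintype.sum_sum_type, sq, add_assoc]
  rw [h2, hw0]
  have h3 : ∑ j, (w (Sum.inr (Sum.inl j))) ^ 2
      = ∑ j, (x (Sum.inr (Sum.inl j)) - x (Sum.inr (Sum.inr j))) ^ 2 :=
    Finset.sum_congr rfl fun j _ => by rw [hwp]
  have h4 : ∑ j, (w (Sum.inr (Sum.inr j))) ^ 2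
      = (∑ j, (x (Sum.inr (Sum.inl j)) + x (Sum.inr (Sum.inr j))) ^ 2) / 4 := by
    rw [Finset.sum_div]
    exact Finset.sum_congr rfl fun j _ => by rw [hwm]; ring
  rw [h3, h4]

/-- Coercivity of the quadratic form of `gram n`. -/
lemma stmt12_key (n : ℕ) (hn : 1 ≤ n) (x : Idx n → ℝ) :
    1 / (4 * (n:ℝ) + 3) * (∑ a, x a ^ 2) ≤ x ⬝ᵥ (gram n *ᵥ x) := by
  have hsum : ∑ a, x a ^ 2 = x (Sum.inl ()) ^ 2 +
      ((∑ j, (x (Sum.inr (Sum.inl j)) - x (Sum.inr (Sum.inr j))) ^ 2)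
        + ∑ j, (x (Sum.inr (Sum.inl j)) + x (Sum.inr (Sum.inr j))) ^ 2) / 2 := by
    rw [Fintype.sum_sum_type, Fintype.sum_sum_type, ← Finset.sum_add_distrib,
      ← Finset.sum_add_distrib]
    simp only [Finset.univ_unique, Finset.sum_singleton]
    congr 1
    rw [Finset.sum_div]
    exact Finset.sum_congr rfl fun j _ => by ring
  have hSB : (∑ i, (x (Sum.inr (Sum.inl i)) + x (Sum.inr (Sum.inr i)))) ^ 2
      ≤ (n:ℝ) * ∑ j, (x (Sum.inr (Sum.inl j)) + x (Sum.inr (Sum.inr j))) ^ 2 := by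
    have := sq_sum_le_card_mul_sum_sq (s := (Finset.univ : Finset (Fin n)))
      (f := fun i => x (Sum.inr (Sum.inl i)) + x (Sum.inr (Sum.inr i)))
    simpa using this
  rw [stmt12_quad_eq, hsum]
  exact stmt12_aux (n:ℝ) _ _ _ _ (by exact_mod_cast hn)
    (Finset.sum_nonneg fun _ _ => sq_nonneg _)
    (Finset.sum_nonneg fun _ _ => sq_nonneg _) hSB

theorem stmt12 (n : ℕ) (hn : 1 ≤ n) :
    1 / (4 * n + 3) ≤ lambdaMin (gram n) := by
  have hH : (gram n).IsHermitian := by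
    show (gram n)ᴴ = gram n
    ext a b
    simp [_root_.gram, Matrix.conjTranspose_apply, dotProduct_comm]
  rw [lambdaMin, dif_pos hH]
  refine le_ciInf fun i => ?_
  set v : Idx n → ℝ := ⇑(hH.eigenvectorBasis i) with hv
  have hval : hH.eigenvalues i = v ⬝ᵥ (gram n *ᵥ v) := by
    rw [hH.eigenvalues_eq i]
    simp [dotProduct, hv]
  have hnorm : ∑ a, v a ^ 2 = 1 := by
    have h1 := hH.eigenvectorBasis.orthonormal.1 i
    have h2 : @inner ℝ _ _ (hH.eigenvectorBasis i) (hH.eigenvectorBasis i) = (1:ℝ) := by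
      rw [real_inner_self_eq_norm_mul_norm, h1, one_mul]
    rw [PiLp.inner_apply] at h2
    simpa [RCLike.inner_apply, sq] using h2
  calc (1:ℝ) / (4 * n + 3) = 1 / (4 * (n:ℝ) + 3) * ∑ a, v a ^ 2 := by rw [hnorm, mul_one]
    _ ≤ v ⬝ᵥ (gram n *ᵥ v) := stmt12_key n hn v
    _ = hH.eigenvalues i := hval.symm
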